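/- Let R be a principal ideal domain with a ring automorphism σ and let p, q ∈ R be nonzero. Then the only (p,q)-invariant ideals of R are 0 and R if and only if both of the following hold: (1) for every irreducible z ∈ R and every n ≥ 1, σ^n(z) is not an associate of z; and (2) there is no irreducible element q₀ ∈ R and integer n ≥ 0 such that q₀ divides q and σ^n(q₀) divides p. -/

import Mathlib

/-- An ideal `I` of `R` is `(p,q)`-invariant if `σ⁻¹(i)·p ∈ I` and `σ(i)·q ∈ I`
for every `i ∈ I`. -/
def PQInvariant {R : Type*} [CommRing R] (σ : R ≃+* R) (p q : R) (I : Ideal R) : Prop :=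
  ∀ i ∈ I, σ⁻¹ i * p ∈ I ∧ σ i * q ∈ I

section Aux

variable {R : Type*} [CommRing R]

private lemma cancel1 (τ : R ≃+* R) (k : ℕ) (x : R) : (τ ^ k) ((τ⁻¹ ^ k) x) = x := by
  rw [inv_pow]; exact (τ ^ k).apply_symm_apply x

private lemma cancel2 (τ : R ≃+* R) (k : ℕ) (x : R) : (τ⁻¹ ^ k) ((τ ^ k) x) = x := by
  rw [inv_pow]; exact (τ ^ k).symm_apply_apply x

private lemma inv_apply_apply (τ : R ≃+* R) (x : R) : τ⁻¹ (τ x) = x :=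
  τ.symm_apply_apply x

private lemma apply_inv_apply (τ : R ≃+* R) (x : R) : τ (τ⁻¹ x) = x :=
  τ.apply_symm_apply x

private lemma pow_add_apply (τ : R ≃+* R) (a b : ℕ) (x : R) :
    (τ ^ (a + b)) x = (τ ^ a) ((τ ^ b) x) := by
  rw [pow_add]; rfl

private lemma iter_dvd (τ : R ≃+* R) (g q : R) (h : g ∣ τ g * q) :
    ∀ n : ℕ, g ∣ (τ ^ n) g * ∏ j ∈ Finset.range n, (τ ^ j) q := by
  intro n
  induction n with
  | zero =>
    simp only [Finset.range_zero, Finset.prod_empty, mul_one]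
    exact dvd_refl g
  | succ n ih =>
    have h2 : (τ ^ n) g ∣ (τ ^ (n + 1)) g * (τ ^ n) q := by
      have h3 := map_dvd (τ ^ n) h
      rw [map_mul] at h3
      have h4 : (τ ^ n) (τ g) = (τ ^ (n + 1)) g := by rw [pow_succ]; rfl
      rwa [h4] at h3
    calc g ∣ (τ ^ n) g * ∏ j ∈ Finset.range n, (τ ^ j) q := ih
      _ ∣ ((τ ^ (n + 1)) g * (τ ^ n) q) * ∏ j ∈ Finset.range n, (τ ^ j) q :=
        mul_dvd_mul_right h2 _
      _ = (τ ^ (n + 1)) g * ∏ j ∈ Finset.range (n + 1), (τ ^ j) q := by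
        rw [Finset.prod_range_succ]; ring

private lemma exists_not_dvd [IsDomain R] [IsPrincipalIdealRing R]
    (τ : R ≃+* R) (z g : R) (hz : Irreducible z) (hg : g ≠ 0)
    (H : ∀ m : ℕ, 1 ≤ m → ¬ Associated ((τ ^ m) z) z) :
    ∃ n : ℕ, ¬ z ∣ (τ ^ n) g := by
  classical
  by_contra hall
  push_neg at hall
  have hw : ∀ n : ℕ, (τ⁻¹ ^ n) z ∣ g := fun n => by
    have h1 := map_dvd (τ⁻¹ ^ n) (hall n)
    rwa [cancel2] at h1
  have hwirr : ∀ n : ℕ, Irreducible ((τ⁻¹ ^ n) z) := fun n =>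
    (MulEquiv.irreducible_iff ((τ⁻¹ ^ n : R ≃+* R))).mpr hz
  choose F hFmem hFassoc using fun n =>
    UniqueFactorizationMonoid.exists_mem_factors_of_dvd hg (hwirr n) (hw n)
  -- pigeonhole
  have hfin : ∀ n, F n ∈ (UniqueFactorizationMonoid.factors g).toFinset := fun n =>
    Multiset.mem_toFinset.mpr (hFmem n)
  obtain ⟨i, j, hij, hFij⟩ :=
    Finite.exists_ne_map_eq_of_infinite
      (fun n : ℕ => (⟨F n, hfin n⟩ : (UniqueFactorizationMonoid.factors g).toFinset))
  have hFeq : F i = F j := Subtype.ext_iff.mp hFij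
  have hassoc : Associated ((τ⁻¹ ^ i) z) ((τ⁻¹ ^ j) z) :=
    (hFassoc i).trans (hFeq ▸ (hFassoc j).symm)
  have key : ∀ a b : ℕ, a < b → Associated ((τ⁻¹ ^ a) z) ((τ⁻¹ ^ b) z) → False := by
    intro a b hab h1
    set m := b - a with hm
    have hb : b = a + m := by omega
    have h2 : (τ⁻¹ ^ b) z = (τ⁻¹ ^ a) ((τ⁻¹ ^ m) z) := by
      rw [hb, pow_add_apply]
    rw [h2] at h1
    have h3 := h1.map (τ ^ a)
    rw [cancel1, cancel1] at h3
    have h4 := h3.map (τ ^ m)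
    rw [cancel1] at h4
    exact H m (by omega) h4
  rcases hij.lt_or_gt with h | h
  · exact key i j h hassoc
  · exact key j i h hassoc.symm

private lemma nontrivial_invariant (σ : R ≃+* R) (p q g : R)
    (hg0 : g ≠ 0) (hgu : ¬ IsUnit g)
    (h1 : g ∣ σ⁻¹ g * p) (h2 : g ∣ σ g * q) :
    ¬ (∀ I : Ideal R, PQInvariant σ p q I → I = ⊥ ∨ I = ⊤) := by
  intro hLHS
  have hinv : PQInvariant σ p q (Ideal.span {g}) := by
    intro i hi
    rw [Ideal.mem_span_singleton] at hi
    obtain ⟨r, rfl⟩ := hi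
    constructor <;> rw [Ideal.mem_span_singleton]
    · have he : σ⁻¹ (g * r) * p = (σ⁻¹ g * p) * σ⁻¹ r := by rw [map_mul]; ring
      rw [he]; exact h1.mul_right _
    · have he : σ (g * r) * q = (σ g * q) * σ r := by rw [map_mul]; ring
      rw [he]; exact h2.mul_right _
  rcases hLHS _ hinv with h | h
  · exact hg0 (Ideal.span_singleton_eq_bot.mp h)
  · exact hgu (Ideal.span_singleton_eq_top.mp h)

private lemma pow_ne_zero_apply [IsDomain R] (τ : R ≃+* R) (k : ℕ) {x : R} (hx : x ≠ 0) :
    (τ ^ k) x ≠ 0 := by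
  intro h
  apply hx
  have := congrArg (τ⁻¹ ^ k : R ≃+* R) h
  rwa [cancel2, map_zero] at this

end Aux

/-- Simplicity criterion for the rank-one `R`-free module `V_p` over a
PID: the only `(p,q)`-invariant ideals are `0` and `R` iff all `σ`-orbits of irreducibles
are infinite and no irreducible `q₀ ∣ q` has `σ^n(q₀) ∣ p` for some `n ≥ 0`. -/
theorem stmt_3 {R : Type*} [CommRing R] [IsDomain R] [IsPrincipalIdealRing R]
    (σ : R ≃+* R) (p q : R) (hp : p ≠ 0) (hq : q ≠ 0) :
    (∀ I : Ideal R, PQInvariant σ p q I → I = ⊥ ∨ I = ⊤) ↔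
      ((∀ z : R, Irreducible z → ∀ n : ℕ, 1 ≤ n → ¬ Associated ((σ ^ n) z) z) ∧
        ¬ ∃ (q₀ : R) (n : ℕ), Irreducible q₀ ∧ q₀ ∣ q ∧ (σ ^ n) q₀ ∣ p) := by
  constructor
  · intro hLHS
    constructor
    · -- condition (1)
      intro z hz n hn hassoc
      set g := ∏ k ∈ Finset.range n, (σ ^ k) z with hgdef
      have hσg : σ g = ∏ k ∈ Finset.range n, (σ ^ (k + 1)) z := by
        rw [hgdef, map_prod]
        refine Finset.prod_congr rfl fun k _ => ?_
        rw [pow_succ']; rfl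
      have hkey : g * (σ ^ n) z = z * σ g := by
        rw [hσg, hgdef, ← Finset.prod_range_succ]
        rw [Finset.prod_range_succ' (fun k => (σ ^ k) z) n]
        have h0 : ((σ : R ≃+* R) ^ 0) z = z := by rw [pow_zero]; rfl
        rw [h0]; ring
      obtain ⟨u, hu⟩ := hassoc
      have hzne : z ≠ 0 := hz.ne_zero
      have hgu : g = σ g * u := by
        have : z * g = z * (σ g * u) := by
          calc z * g = g * ((σ ^ n) z * u) := by rw [hu]; ring
            _ = (z * σ g) * u := by rw [← mul_assoc, hkey]
            _ = z * (σ g * u) := by ring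
        exact mul_left_cancel₀ hzne this
      have hdvd1 : g ∣ σ g := by
        refine ⟨(↑u⁻¹ : R), ?_⟩
        calc σ g = σ g * ↑u * ↑u⁻¹ := by rw [mul_assoc, Units.mul_inv, mul_one]
          _ = g * ↑u⁻¹ := by rw [← hgu]
      have hdvd2 : g ∣ σ⁻¹ g := by
        refine ⟨σ⁻¹ ↑u, ?_⟩
        conv_lhs => rw [hgu]
        rw [map_mul, inv_apply_apply]
      have hg0 : g ≠ 0 := by
        rw [hgdef]
        exact Finset.prod_ne_zero_iff.mpr fun k _ => pow_ne_zero_apply σ k hzne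
      have hgnu : ¬ IsUnit g := by
        intro hun
        have hz_dvd : z ∣ g :=
          Finset.dvd_prod_of_mem (fun k => (σ ^ k) z)
            (Finset.mem_range.mpr (by omega : (0:ℕ) < n))
        exact hz.not_isUnit (isUnit_of_dvd_unit hz_dvd hun)
      exact nontrivial_invariant σ p q g hg0 hgnu
        ((hdvd2).mul_right p) ((hdvd1).mul_right q) hLHS
    · -- condition (2)
      rintro ⟨q₀, n, hq₀, hq₀q, hq₀p⟩
      set g := ∏ k ∈ Finset.range (n + 1), (σ ^ k) q₀ with hgdef
      have hq₀ne : q₀ ≠ 0 := hq₀.ne_zero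
      -- σ g * q₀ = g * σ^{n+1} q₀
      have hσg : σ g = ∏ k ∈ Finset.range (n + 1), (σ ^ (k + 1)) q₀ := by
        rw [hgdef, map_prod]
        refine Finset.prod_congr rfl fun k _ => ?_
        rw [pow_succ']; rfl
      have hkey2 : σ g * q₀ = g * (σ ^ (n + 1)) q₀ := by
        rw [hσg, hgdef, ← Finset.prod_range_succ]
        rw [Finset.prod_range_succ' (fun k => (σ ^ k) q₀) (n + 1)]
        have h0 : ((σ : R ≃+* R) ^ 0) q₀ = q₀ := by rw [pow_zero]; rfl
        rw [h0]
      -- σ⁻¹ g * σ^n q₀ = g * σ⁻¹ q₀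
      set w := σ⁻¹ q₀ with hwdef
      have hgw : ∀ k : ℕ, (σ ^ k) q₀ = (σ ^ (k + 1)) w := by
        intro k
        have : (σ ^ (k + 1)) w = (σ ^ k) (σ w) := by rw [pow_succ]; rfl
        rw [this, hwdef, apply_inv_apply]
      have hσig : σ⁻¹ g = ∏ k ∈ Finset.range (n + 1), (σ ^ k) w := by
        rw [hgdef, map_prod]
        refine Finset.prod_congr rfl fun k _ => ?_
        rw [hgw k]
        have : (σ ^ (k + 1)) w = σ ((σ ^ k) w) := by rw [pow_succ']; rfl
        rw [this, inv_apply_apply]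
      have hkey1 : σ⁻¹ g * (σ ^ n) q₀ = g * w := by
        rw [hσig, hgw n, ← Finset.prod_range_succ]
        rw [Finset.prod_range_succ' (fun k => (σ ^ k) w) (n + 1)]
        have h0 : ((σ : R ≃+* R) ^ 0) w = w := by rw [pow_zero]; rfl
        rw [h0, hgdef]
        rw [Finset.prod_congr rfl fun k _ => hgw k]
        try ring
      obtain ⟨s, hs⟩ := hq₀q
      obtain ⟨t, ht⟩ := hq₀p
      have h2 : g ∣ σ g * q := by
        refine ⟨(σ ^ (n + 1)) q₀ * s, ?_⟩
        rw [hs, ← mul_assoc, hkey2]; ring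
      have h1 : g ∣ σ⁻¹ g * p := by
        refine ⟨w * t, ?_⟩
        rw [ht, ← mul_assoc, hkey1]; ring
      have hg0 : g ≠ 0 := by
        rw [hgdef]
        exact Finset.prod_ne_zero_iff.mpr fun k _ => pow_ne_zero_apply σ k hq₀ne
      have hgnu : ¬ IsUnit g := by
        intro hun
        have hdvd : q₀ ∣ g :=
          Finset.dvd_prod_of_mem (fun k => (σ ^ k) q₀)
            (Finset.mem_range.mpr (by omega : (0:ℕ) < n + 1))
        exact hq₀.not_isUnit (isUnit_of_dvd_unit hdvd hun)
      exact nontrivial_invariant σ p q g hg0 hgnu h1 h2 hLHS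
  · rintro ⟨hA, hB⟩ I hI
    by_contra hcon
    push_neg at hcon
    obtain ⟨hIbot, hItop⟩ := hcon
    obtain ⟨g, hgI0⟩ := (IsPrincipalIdealRing.principal I).1
    have hgI : I = Ideal.span {g} := hgI0
    rw [hgI] at hIbot hItop
    have hg0 : g ≠ 0 := fun h => hIbot (by rw [h, Ideal.span_singleton_eq_bot])
    have hgnu : ¬ IsUnit g := fun h => hItop (Ideal.span_singleton_eq_top.mpr h)
    have hgmem : g ∈ I := by rw [hgI]; exact Ideal.subset_span (Set.mem_singleton g)
    obtain ⟨hm1, hm2⟩ := hI g hgmem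
    rw [hgI, Ideal.mem_span_singleton] at hm1 hm2
    -- hm1 : g ∣ σ⁻¹ g * p ; hm2 : g ∣ σ g * q
    obtain ⟨z, hzirr, hzdvd⟩ := WfDvdMonoid.exists_irreducible_factor hgnu hg0
    have hzprime : Prime z := UniqueFactorizationMonoid.irreducible_iff_prime.mp hzirr
    -- direction σ (gives q₀ ∣ q)
    have Hσ : ∀ m : ℕ, 1 ≤ m → ¬ Associated ((σ ^ m) z) z := hA z hzirr
    have Hσi : ∀ m : ℕ, 1 ≤ m → ¬ Associated ((σ⁻¹ ^ m) z) z := by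
      intro m hm h
      have h2 := h.map (σ ^ m)
      rw [cancel1] at h2
      exact Hσ m hm h2.symm
    obtain ⟨n₁, hn₁⟩ := exists_not_dvd σ z g hzirr hg0 Hσ
    obtain ⟨n₂, hn₂⟩ := exists_not_dvd σ⁻¹ z g hzirr hg0 Hσi
    -- find j with z ∣ σ^j q
    have hd1 := iter_dvd σ g q hm2 n₁
    have hd2 := iter_dvd σ⁻¹ g p hm1 n₂
    have hz1 : z ∣ (σ ^ n₁) g * ∏ j ∈ Finset.range n₁, (σ ^ j) q := hzdvd.trans hd1
    have hz2 : z ∣ (σ⁻¹ ^ n₂) g * ∏ j ∈ Finset.range n₂, (σ⁻¹ ^ j) p := hzdvd.trans hd2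
    have hzq : z ∣ ∏ j ∈ Finset.range n₁, (σ ^ j) q :=
      (hzprime.dvd_mul.mp hz1).resolve_left hn₁
    have hzp : z ∣ ∏ j ∈ Finset.range n₂, (σ⁻¹ ^ j) p :=
      (hzprime.dvd_mul.mp hz2).resolve_left hn₂
    obtain ⟨j, _, hjq⟩ := hzprime.exists_mem_finset_dvd hzq
    obtain ⟨j', _, hjp⟩ := hzprime.exists_mem_finset_dvd hzp
    -- q₀ := σ⁻¹^j z
    refine hB ⟨(σ⁻¹ ^ j) z, j' + j, ?_, ?_, ?_⟩
    · exact (MulEquiv.irreducible_iff ((σ⁻¹ ^ j : R ≃+* R))).mpr hzirr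
    · have := map_dvd (σ⁻¹ ^ j) hjq
      rwa [cancel2] at this
    · have h5 : (σ ^ (j' + j)) ((σ⁻¹ ^ j) z) = (σ ^ j') z := by
        rw [pow_add_apply, cancel1]
      rw [h5]
      have := map_dvd (σ ^ j') hjp
      rwa [cancel1] at this
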